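/- The ω-language L = {aⁿ b aⁿ b^ω | n∈ℕ} over {a,b} is a deterministic ω-context-free language (L ∈ DCFL_ω), but for every partition of {a,b} into calls, returns and internal actions, L is not a visibly pushdown ω-language (L ∉ VPL_ω); hence DCFL_ω ⊄ VPL_ω. -/

import Mathlib

/-!  Common definitions: pushdown machines, ω-pushdown automata, pushdown games,
pushdown strategies (deterministic pushdown automata with output), and
alternating two-way / nondeterministic one-way parity tree automata. -/

/-- Kinds of letters in a visibly pushdown alphabet. -/
inductive VKind : Type
  | call | ret | intern

/-- A pushdown machine over states `Q`, input alphabet `A` and stack alphabet `Γ`.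
The initial stack symbol `⊥` is implicit: a stack content `γ⊥ ∈ Γ*⊥` is modeled by
the list `γ` of symbols above `⊥`, and the top-of-stack argument `none` of the
transition function represents `⊥` (i.e. the empty list).  A transition replaces the
topmost symbol by the returned word (respectively pushes the returned word on top of
`⊥`), so `⊥` can neither be pushed onto nor removed from the stack.  The input
letter `none` is `ε`. -/
structure PDM (Q A Γ : Type) where
  δ : Q → Option A → Option Γ → Set (Q × List Γ)
  qin : Q

namespace PDM

variable {Q A Γ : Type}

/-- A configuration: a state together with the stack content (above `⊥`). -/
abbrev Conf (Q Γ : Type) : Type := Q × List Γ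

/-- Stack height of a configuration `(q,γ⊥)`: the length `|γ⊥|` (the `⊥` counts). -/
def sh (c : Conf Q Γ) : ℕ := c.2.length + 1

/-- One transition step of the machine, labeled by `none` (an `ε`-move) or `some a`. -/
def Step (M : PDM Q A Γ) (c : Conf Q Γ) (a : Option A) (c' : Conf Q Γ) : Prop :=
  match c.2 with
  | [] => c' ∈ M.δ c.1 a none
  | t :: rest => ∃ γ' : List Γ, (c'.1, γ') ∈ M.δ c.1 a (some t) ∧ c'.2 = γ' ++ rest

/-- Determinism: `|δ(q,a,A)| + |δ(q,ε,A)| ≤ 1` for all `q ∈ Q`, `a ∈ A`, `A ∈ Γ⊥`. -/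
def Deterministic (M : PDM Q A Γ) : Prop :=
  ∀ (q : Q) (t : Option Γ),
    (∀ a : Option A, (M.δ q a t).Subsingleton) ∧
    (∀ a : A, (M.δ q (some a) t).Nonempty → M.δ q none t = ∅)

/-- A realtime machine has no `ε`-transitions. -/
def Realtime (M : PDM Q A Γ) : Prop := ∀ q t, M.δ q none t = ∅

/-- Normal form: every transition is a push of exactly one symbol (`δ(q,a,A)=(q',A'A)`),
a skip (`δ(q,a,A)=(q',A)`), or a pop (`δ(q,a,A)=(q',ε)`). -/
def NormalForm (M : PDM Q A Γ) : Prop :=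
  ∀ q a t p, p ∈ M.δ q a t →
    p.2 = ([] : List Γ) ∨ p.2 = t.toList ∨ ∃ B : Γ, p.2 = B :: t.toList

/-- A blind one-counter machine: every transition enabled with empty stack (counter `0`)
is also enabled, with the same state change and counter effect, with nonempty stack:
`δ(q,a,⊥) ∋ (q',Aⁿ⊥)` implies `δ(q,a,A) ∋ (q',AⁿA)`. -/
def Blind (M : PDM Q A Unit) : Prop :=
  ∀ (q : Q) (a : Option A) (p : Q × List Unit),
    p ∈ M.δ q a none → (p.1, p.2 ++ [()]) ∈ M.δ q a (some ())

/-- A visibly pushdown machine w.r.t. the partition `kind` of the input alphabet into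
calls, returns and internal actions: no `ε`-transitions; on a call exactly one symbol is
pushed and the transition does not depend on the top of the stack; on a return the top
symbol is popped (`⊥` is left unchanged); on an internal action the stack is unchanged
and the transition does not depend on the top of the stack. -/
def Visibly (M : PDM Q A Γ) (kind : A → VKind) : Prop :=
  (∀ q t, M.δ q none t = ∅) ∧
  (∀ q a, kind a = VKind.call → ∃ mv : Set (Q × Γ),
      ∀ t, M.δ q (some a) t = (fun p : Q × Γ => (p.1, p.2 :: t.toList)) '' mv) ∧
  (∀ q a t, kind a = VKind.ret → ∀ p ∈ M.δ q (some a) t, p.2 = ([] : List Γ)) ∧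
  (∀ q a, kind a = VKind.intern → ∃ mv : Set Q,
      ∀ t, M.δ q (some a) t = (fun q' : Q => (q', t.toList)) '' mv)

/-- `ρ` is an infinite run of `M` on the ω-word `α`: it starts in the initial
configuration `(q_in,⊥)`, each step follows `δ` on a letter or on `ε`, and the
consumed letters (the non-`ε` labels, in order) form exactly `α`. -/
def IsRunOn (M : PDM Q A Γ) (ρ : ℕ → Conf Q Γ) (α : ℕ → A) : Prop :=
  ρ 0 = (M.qin, []) ∧
  ∃ u : ℕ → Option A,
    (∀ n : ℕ, M.Step (ρ n) (u n) (ρ (n + 1))) ∧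
    ∃ φ : ℕ → ℕ, StrictMono φ ∧ (∀ k : ℕ, u (φ k) = some (α k)) ∧
      ∀ n : ℕ, (u n).isSome = true → ∃ k : ℕ, φ k = n

/-- `Inf(ρ)`: states occurring infinitely often in `ρ`. -/
def InfOcc (ρ : ℕ → Conf Q Γ) : Set Q := {q | ∀ n : ℕ, ∃ m, n ≤ m ∧ (ρ m).1 = q}

/-- `Steps_ρ = {n | ∀ m ≥ n, sh(ρ(m)) ≥ sh(ρ(n))}`. -/
def StepsSet (ρ : ℕ → Conf Q Γ) : Set ℕ := {n | ∀ m : ℕ, n ≤ m → sh (ρ n) ≤ sh (ρ m)}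

/-- States occurring infinitely often in the subsequence `ρ|_{Steps_ρ}`. -/
def InfOccStair (ρ : ℕ → Conf Q Γ) : Set Q :=
  {q | ∀ n : ℕ, ∃ m, n ≤ m ∧ m ∈ StepsSet ρ ∧ (ρ m).1 = q}

/-- Parity condition: the minimal priority seen infinitely often is even. -/
def ParityAcc (col : Q → ℕ) (ρ : ℕ → Conf Q Γ) : Prop :=
  Even (sInf (col '' InfOcc ρ))

/-- Stair parity condition: the minimal priority seen infinitely often in
`ρ|_{Steps_ρ}` is even. -/
def StairParityAcc (col : Q → ℕ) (ρ : ℕ → Conf Q Γ) : Prop :=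
  Even (sInf (col '' InfOccStair ρ))

/-- The ω-language of the parity pushdown automaton `(M, col)`. -/
def ParityLang (M : PDM Q A Γ) (col : Q → ℕ) : Set (ℕ → A) :=
  {α | ∃ ρ : ℕ → Conf Q Γ, M.IsRunOn ρ α ∧ ParityAcc col ρ}

/-- The ω-language of the stair parity pushdown automaton `(M, col)`. -/
def StairParityLang (M : PDM Q A Γ) (col : Q → ℕ) : Set (ℕ → A) :=
  {α | ∃ ρ : ℕ → Conf Q Γ, M.IsRunOn ρ α ∧ StairParityAcc col ρ}

/-- Acceptance of a finite word by the pushdown automaton `(M, F)`: some finite run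
from the initial configuration consuming exactly `w` ends in a final state. -/
def AcceptsFin (M : PDM Q A Γ) (F : Set Q) (w : List A) : Prop :=
  ∃ (m : ℕ) (ρ : ℕ → Conf Q Γ) (u : ℕ → Option A),
    ρ 0 = (M.qin, []) ∧ (∀ k < m, M.Step (ρ k) (u k) (ρ (k + 1))) ∧
    (List.ofFn (fun k : Fin m => u k.1)).reduceOption = w ∧ (ρ m).1 ∈ F

/-- An infinite play of the pushdown game: a sequence of configurations starting in the
initial configuration, together with the labels of the chosen transitions. -/
def IsPlay (M : PDM Q A Γ) (conf : ℕ → Conf Q Γ) (lab : ℕ → Option A) : Prop :=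
  conf 0 = (M.qin, []) ∧ ∀ n : ℕ, M.Step (conf n) (lab n) (conf (n + 1))

/-- Player `i` has a winning strategy (as an abstract function from histories of moves
to moves) in the pushdown game on `M` given by the partition `owner` of the states,
where Player 0 wins an infinite play `conf` iff `W conf` holds: the strategy always
proposes an enabled transition at any reachable consistent position owned by Player `i`,
and every infinite play consistent with it is won by Player `i`. -/
def HasAbstractWinning (M : PDM Q A Γ) (owner : Q → Fin 2)
    (W : (ℕ → Conf Q Γ) → Prop) (i : Fin 2) : Prop :=
  ∃ σ : List (Option A) → Option A,
    (∀ (n : ℕ) (conf : ℕ → Conf Q Γ) (lab : ℕ → Option A),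
      conf 0 = (M.qin, []) →
      (∀ k < n, M.Step (conf k) (lab k) (conf (k + 1))) →
      (∀ k < n, owner (conf k).1 = i → lab k = σ (List.ofFn (fun j : Fin k => lab j.1))) →
      owner (conf n).1 = i →
      ∃ c' : Conf Q Γ, M.Step (conf n) (σ (List.ofFn (fun j : Fin n => lab j.1))) c') ∧
    (∀ (conf : ℕ → Conf Q Γ) (lab : ℕ → Option A),
      IsPlay M conf lab →
      (∀ n : ℕ, owner (conf n).1 = i → lab n = σ (List.ofFn (fun j : Fin n => lab j.1))) →
      (W conf ↔ i = 0))

/-- The pushdown game on `M` with partition `owner` and winning condition `W`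
(for Player 0) is determined. -/
def Determined (M : PDM Q A Γ) (owner : Q → Fin 2)
    (W : (ℕ → Conf Q Γ) → Prop) : Prop :=
  ∃ i : Fin 2, HasAbstractWinning M owner W i

end PDM

/-- A deterministic pushdown automaton with output (a pushdown strategy): it reads the
opponent's moves and outputs the player's own next choices.  `δ s inp t = some (s', γ', out)`
means: in state `s` with top of stack `t` (`none` = `⊥`), on input `inp` (`none` = `ε`)
the machine moves to state `s'`, replaces the top of the stack by `γ'` and outputs `out`
(`none` = `ε`-output).  Partiality of `δ` gives determinism per input letter. -/
structure StratPDA (A Γ' : Type) where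
  S : Type
  sin : S
  δ : S → Option A → Option Γ' → Option (S × List Γ' × Option A)

namespace StratPDA

variable {Q A Γ Γ' : Type}

/-- Determinism: if an `ε`-input transition is present then no letter transition is. -/
def Det (T : StratPDA A Γ') : Prop :=
  ∀ (s : T.S) (t : Option Γ'),
    (T.δ s none t).isSome = true → ∀ a : A, T.δ s (some a) t = none

/-- One step of the strategy transducer (same stack convention as for `PDM`). -/
def TStep (T : StratPDA A Γ') (c : T.S × List Γ') (inp out : Option A)
    (c' : T.S × List Γ') : Prop :=
  match c.2 with
  | [] => T.δ c.1 inp none = some (c'.1, c'.2, out)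
  | t :: rest => ∃ γ' : List Γ',
      T.δ c.1 inp (some t) = some (c'.1, γ', out) ∧ c'.2 = γ' ++ rest

/-- A blind one-counter strategy transducer: every transition enabled with counter `0`
is also enabled, with the same effect, with nonzero counter. -/
def Blind (T : StratPDA A Unit) : Prop :=
  ∀ (s : T.S) (inp : Option A) (r : T.S × List Unit × Option A),
    T.δ s inp none = some r → T.δ s inp (some ()) = some (r.1, r.2.1 ++ [()], r.2.2)

/-- A realtime strategy transducer: no transition both reads `ε` and outputs `ε`
(every transition carries a letter, either read or written). -/
def Realtime (T : StratPDA A Γ') : Prop :=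
  ∀ (s : T.S) (t : Option Γ') (r : T.S × List Γ' × Option A),
    T.δ s none t = some r → r.2.2 ≠ none

/-- Stack discipline of a visibly pushdown machine for the letter `a`. -/
def VStk (kind : A → VKind) (a : A) (t : Option Γ') (γ' : List Γ') : Prop :=
  match kind a with
  | VKind.call => ∃ B : Γ', γ' = B :: t.toList
  | VKind.ret => γ' = ([] : List Γ')
  | VKind.intern => γ' = t.toList

/-- A visibly pushdown strategy transducer: every transition carries exactly one letter
(the letter read on input transitions, the letter written on output transitions) and the
stack is used according to the kind of that letter. -/
def Visibly (T : StratPDA A Γ') (kind : A → VKind) : Prop :=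
  (∀ (s : T.S) (a : A) (t : Option Γ') (s' : T.S) (γ' : List Γ') (out : Option A),
      T.δ s (some a) t = some (s', γ', out) → out = none ∧ VStk kind a t γ') ∧
  (∀ (s : T.S) (t : Option Γ') (s' : T.S) (γ' : List Γ') (out : Option A),
      T.δ s none t = some (s', γ', out) → ∃ a : A, out = some a ∧ VStk kind a t γ')

/-- The strategy transducer `T`, playing for Player `i`, is consistent with the play
`(conf, lab)` of the pushdown game on `M`: `T` runs in lockstep with the play, reading
the opponent's moves and outputting Player `i`'s moves. -/
def Consistent (T : StratPDA A Γ') (M : PDM Q A Γ) (owner : Q → Fin 2) (i : Fin 2)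
    (conf : ℕ → PDM.Conf Q Γ) (lab : ℕ → Option A)
    (τ : ℕ → T.S × List Γ') : Prop :=
  τ 0 = (T.sin, []) ∧
  ∀ n : ℕ, T.TStep (τ n) (if owner (conf n).1 = i then none else lab n)
      (if owner (conf n).1 = i then lab n else none) (τ (n + 1))

/-- `T` realizes a winning strategy for Player `i` in the pushdown game on `M` with
partition `owner`, where Player 0 wins an infinite play `conf` iff `W conf` holds:
`T` is deterministic; along every finite `T`-consistent play prefix `T` proposes an
enabled move at positions of Player `i` and can process every enabled move of the
opponent; and every infinite play consistent with `T` is won by Player `i`. -/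
def IsWinningStrat (T : StratPDA A Γ') (M : PDM Q A Γ) (owner : Q → Fin 2)
    (W : (ℕ → PDM.Conf Q Γ) → Prop) (i : Fin 2) : Prop :=
  T.Det ∧
  (∀ (n : ℕ) (conf : ℕ → PDM.Conf Q Γ) (lab : ℕ → Option A) (τ : ℕ → T.S × List Γ'),
    conf 0 = (M.qin, []) → τ 0 = (T.sin, []) →
    (∀ k < n, M.Step (conf k) (lab k) (conf (k + 1))) →
    (∀ k < n, T.TStep (τ k) (if owner (conf k).1 = i then none else lab k)
        (if owner (conf k).1 = i then lab k else none) (τ (k + 1))) →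
    ((owner (conf n).1 = i →
        ∃ (x : Option A) (c' : PDM.Conf Q Γ) (τ' : T.S × List Γ'),
          M.Step (conf n) x c' ∧ T.TStep (τ n) none x τ') ∧
     (owner (conf n).1 ≠ i →
        ∀ (x : Option A) (c' : PDM.Conf Q Γ), M.Step (conf n) x c' →
          ∃ τ' : T.S × List Γ', T.TStep (τ n) x none τ'))) ∧
  (∀ (conf : ℕ → PDM.Conf Q Γ) (lab : ℕ → Option A) (τ : ℕ → T.S × List Γ'),
    PDM.IsPlay M conf lab → T.Consistent M owner i conf lab τ → (W conf ↔ i = 0))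

end StratPDA

/-! Tree automata. -/

/-- Positive Boolean formulas over `X` (with `true` and `false`). -/
inductive PosBool (X : Type) : Type
  | tru | fls
  | var (x : X)
  | and (f g : PosBool X)
  | or (f g : PosBool X)

/-- Satisfaction of a positive Boolean formula by a set of variables. -/
def PosBool.Sat {X : Type} : PosBool X → Set X → Prop
  | .tru, _ => True
  | .fls, _ => False
  | .var x, Y => x ∈ Y
  | .and f g, Y => f.Sat Y ∧ g.Sat Y
  | .or f g, Y => f.Sat Y ∨ g.Sat Y

/-- Navigation directions in a `Γ`-tree: up (to the parent), stay, or down to child `A`.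
Nodes of the full `Γ`-tree are lists over `Γ` with the last chosen direction at the head,
so the child `γ.↓_A` is `A :: γ` and the parent of `A :: γ` is `γ`. -/
inductive TMove (Γ : Type) : Type
  | up | stay
  | down (A : Γ)

def TMove.apply {Γ : Type} : TMove Γ → List Γ → Option (List Γ)
  | .up, [] => none
  | .up, _ :: l => some l
  | .stay, l => some l
  | .down A, l => some (A :: l)

/-- An alternating two-way parity tree automaton over `Sig`-labeled full `Γ`-trees. -/
structure A2TA (Sig Γ : Type) where
  Q : Type
  qin : Q
  δ : Q → Sig → PosBool (TMove Γ × Q)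
  col : Q → ℕ

/-- A run of the A2TA `B` on the `Sig`-labeled full `Γ`-tree `lab`: a tree (over some
branching type `Ξ`, children obtained by consing) whose nodes are labeled by pairs
(state, tree node), rooted at `(q_in, ε)`, such that the successors of every node
satisfy the transition formula. -/
structure A2Run {Sig Γ : Type} (B : A2TA Sig Γ) (lab : List Γ → Sig) where
  Ξ : Type
  tree : Set (List Ξ)
  rlab : List Ξ → B.Q × List Γ
  root_mem : [] ∈ tree
  root_lab : rlab [] = (B.qin, [])
  closed : ∀ (ξ : Ξ) (l : List Ξ), ξ :: l ∈ tree → l ∈ tree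
  trans : ∀ l ∈ tree, ∃ S : Set (TMove Γ × B.Q),
    PosBool.Sat (B.δ (rlab l).1 (lab (rlab l).2)) S ∧
    ∀ dq ∈ S, ∃ γ' : List Γ, TMove.apply dq.1 (rlab l).2 = some γ' ∧
      ∃ ξ : Ξ, ξ :: l ∈ tree ∧ rlab (ξ :: l) = (dq.2, γ')

/-- An infinite path of a run, starting at the root. -/
def A2Run.IsPath {Sig Γ : Type} {B : A2TA Sig Γ} {lab : List Γ → Sig}
    (r : A2Run B lab) (π : ℕ → List r.Ξ) : Prop :=
  π 0 = [] ∧ ∀ n : ℕ, (∃ ξ : r.Ξ, π (n + 1) = ξ :: π n) ∧ π (n + 1) ∈ r.tree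

/-- `B` accepts `lab`: some run is accepting, i.e. on every infinite path the minimal
priority seen infinitely often is even. -/
def A2TA.Accepts {Sig Γ : Type} (B : A2TA Sig Γ) (lab : List Γ → Sig) : Prop :=
  ∃ r : A2Run B lab, ∀ π : ℕ → List r.Ξ, r.IsPath π →
    Even (sInf (B.col '' {q | ∀ n : ℕ, ∃ m, n ≤ m ∧ (r.rlab (π m)).1 = q}))

/-- Stair acceptance for an automaton with the same components (a StA2TA): on every
infinite path the minimal priority seen infinitely often at the `Steps` positions
(positions whose stack/tree-node height is never exceeded from below later) is even. -/
def A2TA.StairAccepts {Sig Γ : Type} (B : A2TA Sig Γ) (lab : List Γ → Sig) : Prop :=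
  ∃ r : A2Run B lab, ∀ π : ℕ → List r.Ξ, r.IsPath π →
    Even (sInf (B.col '' {q | ∀ n : ℕ, ∃ m, n ≤ m ∧
      (∀ m' : ℕ, m ≤ m' → (r.rlab (π m)).2.length ≤ (r.rlab (π m')).2.length) ∧
      (r.rlab (π m)).1 = q}))

/-- A nondeterministic one-way parity tree automaton over `Sig`-labeled full `Γ`-trees. -/
structure N1TA (Sig Γ : Type) where
  Q : Type
  qin : Q
  Δ : Q → Sig → Set (Γ → Q)
  col : Q → ℕ

/-- Acceptance for N1TA: some run (one state per node, top-down) is such that along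
every branch the minimal priority seen infinitely often is even. -/
def N1TA.Accepts {Sig Γ : Type} (E : N1TA Sig Γ) (lab : List Γ → Sig) : Prop :=
  ∃ r : List Γ → E.Q, r [] = E.qin ∧
    (∀ l : List Γ, ∃ f ∈ E.Δ (r l) (lab l), ∀ A : Γ, r (A :: l) = f A) ∧
    ∀ β : ℕ → Γ, Even (sInf (E.col ''
      {q | ∀ n : ℕ, ∃ m, n ≤ m ∧ r (List.ofFn (fun j : Fin m => β j.1)).reverse = q}))


/-- `L ∈ DCFL_ω`: `L` is the ω-language of some deterministic parity pushdown automaton. -/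
def InDCFLomega {A : Type} (L : Set (ℕ → A)) : Prop :=
  ∃ (Q Γ : Type) (_ : Finite Q) (_ : Finite Γ) (M : PDM Q A Γ) (col : Q → ℕ),
    M.Deterministic ∧ PDM.ParityLang M col = L

/-- `L ∈ StDCFL_ω`: `L` is the ω-language of some deterministic stair parity pushdown
automaton. -/
def InStDCFLomega {A : Type} (L : Set (ℕ → A)) : Prop :=
  ∃ (Q Γ : Type) (_ : Finite Q) (_ : Finite Γ) (M : PDM Q A Γ) (col : Q → ℕ),
    M.Deterministic ∧ PDM.StairParityLang M col = L

/-- `L ∈ VPL_ω` (w.r.t. the visibly pushdown alphabet given by `kind`): `L` is the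
ω-language of some (nondeterministic) parity visibly pushdown automaton. -/
def InVPLomega {A : Type} (kind : A → VKind) (L : Set (ℕ → A)) : Prop :=
  ∃ (Q Γ : Type) (_ : Finite Q) (_ : Finite Γ) (M : PDM Q A Γ) (col : Q → ℕ),
    M.Visibly kind ∧ PDM.ParityLang M col = L

/-- The two-letter alphabet `{a, b}`. -/
inductive AB : Type
  | a | b

/-- The ω-language `L = {aⁿ b aⁿ b^ω | n ∈ ℕ}`. -/
def Lanbanb : Set (ℕ → AB) :=
  {α | ∃ n : ℕ, ∀ i : ℕ,
    α i = if i < n then AB.a else if i = n then AB.b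
          else if i ≤ 2 * n then AB.a else AB.b}

section Aux
namespace Anbanb
open PDM

variable {Q A Γ : Type} {M : PDM Q A Γ}

lemma step_cases {c : Conf Q Γ} {a : Option A} {c' : Conf Q Γ} (h : M.Step c a c') :
    (c.2 = [] ∧ c' ∈ M.δ c.1 a none) ∨
    (∃ t rest γ', c.2 = t :: rest ∧ (c'.1, γ') ∈ M.δ c.1 a (some t) ∧ c'.2 = γ' ++ rest) := by
  rcases c with ⟨q, l⟩
  cases l with
  | nil => exact Or.inl ⟨rfl, h⟩
  | cons t rest =>
    obtain ⟨γ', h1, h2⟩ := h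
    exact Or.inr ⟨t, rest, γ', rfl, h1, h2⟩

lemma step_nil {q : Q} {a : Option A} {c' : Conf Q Γ} (h : c' ∈ M.δ q a none) :
    M.Step (q, ([] : List Γ)) a c' := h

lemma step_cons {q : Q} {t : Γ} {rest : List Γ} {a : Option A} {c' : Conf Q Γ}
    (γ' : List Γ) (h1 : (c'.1, γ') ∈ M.δ q a (some t)) (h2 : c'.2 = γ' ++ rest) :
    M.Step (q, t :: rest) a c' := ⟨γ', h1, h2⟩

/-- A "simple" run: no ε-moves, one letter per step. -/
lemma isRunOn_iff_of_realtime (hrt : ∀ q t, M.δ q none t = ∅) (ρ : ℕ → Conf Q Γ) (α : ℕ → A) :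
    M.IsRunOn ρ α ↔ (ρ 0 = (M.qin, []) ∧ ∀ n, M.Step (ρ n) (some (α n)) (ρ (n+1))) := by
  constructor
  · rintro ⟨h0, u, hstep, φ, hmono, hφ, hcov⟩
    have hsome : ∀ k, (u k).isSome = true := by
      intro k
      rcases hu : u k with _ | a
      · exfalso
        have h := hstep k
        rw [hu] at h
        rcases step_cases h with ⟨-, hm⟩ | ⟨t, rest, γ', -, hm, -⟩ <;>
          simp [hrt] at hm
      · rfl
    have hid : ∀ k, φ k = k := by
      intro k
      induction k using Nat.strong_induction_on with
      | _ k ih =>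
        obtain ⟨i, hi⟩ := hcov k (hsome k)
        rcases lt_trichotomy i k with h | h | h
        · rw [ih i h] at hi; omega
        · rwa [h] at hi
        · have : k ≤ φ k := hmono.le_apply
          have h2 : φ k < φ i := hmono h
          omega
    refine ⟨h0, fun n => ?_⟩
    have := hstep n
    rwa [show u n = some (α n) by rw [← hφ n, hid]] at this
  · rintro ⟨h0, hstep⟩
    exact ⟨h0, fun n => some (α n), hstep, id, strictMono_id,
      fun k => rfl, fun n _ => ⟨n, rfl⟩⟩

/-- InfOcc is shift-invariant when two runs eventually agree on states up to shift. -/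
lemma infOcc_eq_of_shift {ρ σ : ℕ → Conf Q Γ} (K K' : ℕ)
    (h : ∀ j : ℕ, (σ (K + j)).1 = (ρ (K' + j)).1) : InfOcc σ = InfOcc ρ := by
  ext q
  constructor
  · intro hq n
    obtain ⟨m, hm, he⟩ := hq (n + K + K')
    refine ⟨K' + (m - K), by omega, ?_⟩
    rw [← h (m - K), show K + (m - K) = m by omega]
    exact he
  · intro hq n
    obtain ⟨m, hm, he⟩ := hq (n + K + K')
    refine ⟨K + (m - K'), by omega, ?_⟩
    rw [h (m - K'), show K' + (m - K') = m by omega]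
    exact he

lemma parityAcc_congr {col : Q → ℕ} {ρ σ : ℕ → Conf Q Γ} (h : InfOcc σ = InfOcc ρ) :
    ParityAcc col σ ↔ ParityAcc col ρ := by unfold ParityAcc; rw [h]

end Anbanb
end Aux
namespace Anbanb
open PDM

/-- The word `aⁿ b aⁿ b^ω`. -/
def w (n : ℕ) : ℕ → AB := fun i =>
  if i < n then AB.a else if i = n then AB.b else if i ≤ 2 * n then AB.a else AB.b

lemma w_mem (n : ℕ) : w n ∈ Lanbanb := ⟨n, fun _ => rfl⟩

inductive St : Type | s0 | s1 | s2 | sk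
  deriving DecidableEq

instance : Fintype St where
  elems := {.s0, .s1, .s2, .sk}
  complete := fun x => by cases x <;> simp

def dδ : St → Option AB → Option Unit → Set (St × List Unit)
  | _, none, _ => ∅
  | .s0, some .a, t => {(.s0, () :: t.toList)}
  | .s0, some .b, t => {(.s1, t.toList)}
  | .s1, some .a, none => {(.sk, [])}
  | .s1, some .a, some _ => {(.s1, [])}
  | .s1, some .b, none => {(.s2, [])}
  | .s1, some .b, some _ => {(.sk, [])}
  | .s2, some .b, t => {(.s2, t.toList)}
  | .s2, some .a, t => {(.sk, t.toList)}
  | .sk, some _, t => {(.sk, t.toList)}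

def MD : PDM St AB Unit := ⟨dδ, .s0⟩

def colD : St → ℕ := fun q => match q with | .s2 => 0 | _ => 1

def nextC : Conf St Unit → AB → Conf St Unit
  | (.s0, l), .a => (.s0, () :: l)
  | (.s0, l), .b => (.s1, l)
  | (.s1, []), .a => (.sk, [])
  | (.s1, _ :: r), .a => (.s1, r)
  | (.s1, []), .b => (.s2, [])
  | (.s1, _ :: r), .b => (.sk, r)
  | (.s2, l), .b => (.s2, l)
  | (.s2, l), .a => (.sk, l)
  | (.sk, l), _ => (.sk, l)

lemma MD_realtime : ∀ (q : St) (t : Option Unit), MD.δ q none t = ∅ := by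
  intro q t; cases q <;> rfl

lemma MD_step_iff (c c' : Conf St Unit) (x : AB) :
    MD.Step c (some x) c' ↔ c' = nextC c x := by
  rcases c with ⟨q, l⟩
  cases q <;> cases x <;> rcases l with _ | ⟨⟨⟩, r⟩ <;>
    simp only [PDM.Step, MD, dδ, nextC, Set.mem_singleton_iff, Prod.ext_iff,
      Prod.mk.injEq] <;>
    (try constructor) <;> (try rintro ⟨γ', ⟨h1, rfl⟩, h2⟩) <;> (try rintro ⟨h1, h2⟩) <;>
    first
      | (exact ⟨h1, by simpa using h2⟩)
      | (exact ⟨_, ⟨h1, rfl⟩, by simpa using h2⟩)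
      | simp_all

lemma MD_det : MD.Deterministic := by
  intro q t
  constructor
  · intro a
    cases q <;> rcases a with _ | (_ | _) <;> cases t <;>
      first
        | exact Set.subsingleton_empty
        | exact Set.subsingleton_singleton
  · intro a _
    cases q <;> rfl

end Anbanb
namespace Anbanb
open PDM

lemma nextC_sk (l : List Unit) (x : AB) : nextC (.sk, l) x = (.sk, l) := by
  cases x <;> rfl

lemma sk_absorb {ρ : ℕ → Conf St Unit} {α : ℕ → AB}
    (hs : ∀ n, ρ (n+1) = nextC (ρ n) (α n)) {k : ℕ} (hk : (ρ k).1 = .sk) :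
    ∀ j, k ≤ j → (ρ j).1 = .sk := by
  intro j hj
  induction j with
  | zero =>
    have : k = 0 := by omega
    rwa [this] at hk
  | succ j ih =>
    rcases Nat.lt_or_ge j k with h | h
    · have : k = j + 1 := by omega
      rwa [this] at hk
    · have hjk := ih h
      rw [hs j]
      rcases hc : ρ j with ⟨q, l⟩
      rw [hc] at hjk; cases hjk
      rw [nextC_sk]

/-- Invariant for runs of `MD`. -/
def Inv (ρ : ℕ → Conf St Unit) (α : ℕ → AB) (k : ℕ) : Prop :=
  (ρ k = (.s0, List.replicate k ()) ∧ ∀ i < k, α i = .a)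
  ∨ (∃ n, n < k ∧ k ≤ 2*n+1 ∧ ρ k = (.s1, List.replicate (2*n+1-k) ()) ∧
      (∀ i < n, α i = .a) ∧ α n = .b ∧ ∀ i, n < i → i < k → α i = .a)
  ∨ (∃ n, 2*n+2 ≤ k ∧ ρ k = (.s2, []) ∧ (∀ i < n, α i = .a) ∧ α n = .b ∧
      (∀ i, n < i → i ≤ 2*n → α i = .a) ∧ ∀ i, 2*n < i → i < k → α i = .b)
  ∨ (ρ k).1 = .sk

lemma inv_holds {ρ : ℕ → Conf St Unit} {α : ℕ → AB}
    (h0 : ρ 0 = (MD.qin, [])) (hs : ∀ n, ρ (n+1) = nextC (ρ n) (α n)) :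
    ∀ k, Inv ρ α k := by
  intro k
  induction k with
  | zero => exact Or.inl ⟨by simpa [MD] using h0, by omega⟩
  | succ k ih =>
    rcases ih with ⟨hc, hpre⟩ | ⟨n, hn1, hn2, hc, c1, c2, c3⟩ | ⟨n, hn1, hc, c1, c2, c3, c4⟩ | hsk
    · rcases hx : α k with _ | _
      · refine Or.inl ⟨?_, fun i hi => ?_⟩
        · rw [hs k, hc, hx]; rfl
        · rcases Nat.lt_or_ge i k with h | h
          · exact hpre i h
          · have : i = k := by omega
            rw [this, hx]
      · refine Or.inr (Or.inl ⟨k, by omega, by omega, ?_, hpre, hx,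
          fun i h1 h2 => absurd h2 (by omega)⟩)
        rw [hs k, hc, hx, show 2*k+1-(k+1) = k from by omega]
        rfl
    · rcases Nat.lt_or_ge k (2*n+1) with h | h
      · -- stack nonempty
        have hrep : List.replicate (2*n+1-k) () = () :: List.replicate (2*n+1-(k+1)) () := by
          rw [← List.replicate_succ]
          congr 1
          omega
        rcases hx : α k with _ | _
        · refine Or.inr (Or.inl ⟨n, by omega, by omega, ?_, c1, c2, fun i h1 h2 => ?_⟩)
          · rw [hs k, hc, hrep, hx]; rfl
          · rcases Nat.lt_or_ge i k with h' | h'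
            · exact c3 i h1 h'
            · have : i = k := by omega
              rw [this, hx]
        · refine Or.inr (Or.inr (Or.inr ?_))
          rw [hs k, hc, hrep, hx]; rfl
      · -- k = 2n+1, stack empty
        have hk : k = 2*n+1 := by omega
        have hrep : List.replicate (2*n+1-k) () = [] := by
          rw [hk, Nat.sub_self]; rfl
        rcases hx : α k with _ | _
        · refine Or.inr (Or.inr (Or.inr ?_))
          rw [hs k, hc, hrep, hx]; rfl
        · refine Or.inr (Or.inr (Or.inl ⟨n, by omega, ?_, c1, c2,
            fun i h1 h2 => c3 i h1 (by omega), fun i h1 h2 => ?_⟩))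
          · rw [hs k, hc, hrep, hx]; rfl
          · have : i = 2*n+1 := by omega
            rw [this, ← hk, hx]
    · rcases hx : α k with _ | _
      · refine Or.inr (Or.inr (Or.inr ?_))
        rw [hs k, hc, hx]; rfl
      · refine Or.inr (Or.inr (Or.inl ⟨n, by omega, ?_, c1, c2, c3, fun i h1 h2 => ?_⟩))
        · rw [hs k, hc, hx]; rfl
        · rcases Nat.lt_or_ge i k with h' | h'
          · exact c4 i h1 h'
          · have : i = k := by omega
            rw [this, hx]
    · refine Or.inr (Or.inr (Or.inr ?_))
      rw [hs k]
      rcases hc : ρ k with ⟨q, l⟩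
      rw [hc] at hsk; cases hsk
      rw [nextC_sk]

/-- The canonical accepting run on `w n`. -/
def runW (n k : ℕ) : Conf St Unit :=
  if k ≤ n then (.s0, List.replicate k ())
  else if k ≤ 2*n+1 then (.s1, List.replicate (2*n+1-k) ()) else (.s2, [])

lemma runW_lo {n k : ℕ} (h : k ≤ n) : runW n k = (.s0, List.replicate k ()) := if_pos h
lemma runW_mid {n k : ℕ} (h1 : n < k) (h2 : k ≤ 2*n+1) :
    runW n k = (.s1, List.replicate (2*n+1-k) ()) := by
  unfold runW; rw [if_neg (by omega), if_pos h2]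
lemma runW_hi {n k : ℕ} (h : 2*n+1 < k) : runW n k = (.s2, []) := by
  unfold runW; rw [if_neg (by omega), if_neg (by omega)]

lemma parityLang_MD : ParityLang MD colD = Lanbanb := by
  ext α
  constructor
  · rintro ⟨ρ, hrun, hacc⟩
    rw [isRunOn_iff_of_realtime MD_realtime] at hrun
    obtain ⟨h0, hstep⟩ := hrun
    have hs : ∀ n, ρ (n+1) = nextC (ρ n) (α n) := fun n => (MD_step_iff _ _ _).1 (hstep n)
    obtain ⟨q0, hq0⟩ := Finite.exists_infinite_fiber (fun k => (ρ k).1)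
    have hq0' : q0 ∈ InfOcc ρ := by
      intro n
      obtain ⟨m, hm, hlt⟩ := (Set.infinite_coe_iff.1 hq0).exists_gt n
      exact ⟨m, by omega, hm⟩
    have hs2 : St.s2 ∈ InfOcc ρ := by
      have hne : (colD '' InfOcc ρ).Nonempty := ⟨colD q0, q0, hq0', rfl⟩
      obtain ⟨q, hq, hcol⟩ := Nat.sInf_mem hne
      have hev : Even (colD q) := hcol ▸ hacc
      rcases q with _ | _ | _ | _
      · exact absurd hev (by decide)
      · exact absurd hev (by decide)
      · exact hq
      · exact absurd hev (by decide)
    have hnosk : ∀ k, (ρ k).1 ≠ .sk := by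
      intro k hk
      obtain ⟨m, hm, hq⟩ := hs2 k
      rw [sk_absorb hs hk m hm] at hq
      cases hq
    have hinv := inv_holds h0 hs
    obtain ⟨k, -, hk⟩ := hs2 0
    rcases hinv k with ⟨hc, -⟩ | ⟨n, -, -, hc, -⟩ | ⟨n, -, hc, c1, c2, c3, -⟩ | hsk
    · rw [hc] at hk; cases hk
    · rw [hc] at hk; cases hk
    · have c4 : ∀ i, 2*n < i → α i = .b := by
        intro i hi
        rcases hinv (i+1) with ⟨-, hpre⟩ | ⟨n', h1, h2, -, d1, d2, -⟩ |
            ⟨n', -, -, d1, d2, -, d4⟩ | hsk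
        · have := hpre n (by omega)
          rw [c2] at this; cases this
        · have hnn : n' = n := by
            rcases lt_trichotomy n' n with h | h | h
            · have := c1 n' h; rw [d2] at this; cases this
            · exact h
            · have := d1 n h; rw [c2] at this; cases this
          omega
        · have hnn : n' = n := by
            rcases lt_trichotomy n' n with h | h | h
            · have := c1 n' h; rw [d2] at this; cases this
            · exact h
            · have := d1 n h; rw [c2] at this; cases this
          rw [hnn] at d4
          exact d4 i (by omega) (by omega)
        · exact absurd hsk (hnosk _)
      refine ⟨n, fun i => ?_⟩
      rcases Nat.lt_or_ge i n with h | h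
      · rw [if_pos h]; exact c1 i h
      rcases Nat.eq_or_lt_of_le h with h' | h'
      · rw [if_neg (by omega), if_pos h'.symm, ← h']; exact c2
      rcases Nat.lt_or_ge (2*n) i with h'' | h''
      · rw [if_neg (by omega), if_neg (by omega), if_neg (by omega)]; exact c4 i h''
      · rw [if_neg (by omega), if_neg (by omega), if_pos h'']; exact c3 i h' h''
    · exact absurd hsk (hnosk _)
  · rintro ⟨n, hα⟩
    refine ⟨runW n, ?_, ?_⟩
    · rw [isRunOn_iff_of_realtime MD_realtime]
      refine ⟨by rw [runW_lo (by omega)]; rfl, fun k => ?_⟩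
      rw [MD_step_iff]
      rcases Nat.lt_or_ge k n with h | h
      · rw [runW_lo (by omega), runW_lo (by omega), hα k, if_pos h, List.replicate_succ]
        rfl
      rcases Nat.eq_or_lt_of_le h with h' | h'
      · rw [runW_mid (by omega) (by omega), runW_lo (by omega), hα k,
          if_neg (by omega), if_pos h'.symm, show 2*n+1-(k+1) = k from by omega]
        rfl
      rcases Nat.lt_or_ge k (2*n+1) with h'' | h''
      · rw [runW_mid (by omega) (by omega), runW_mid (by omega) (by omega), hα k,
          if_neg (by omega), if_neg (by omega), if_pos (by omega),
          show (2*n+1-k) = (2*n+1-(k+1))+1 from by omega, List.replicate_succ]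
        rfl
      rcases Nat.eq_or_lt_of_le h'' with h3 | h3
      · rw [runW_hi (by omega), runW_mid (by omega) (by omega), hα k,
          if_neg (by omega), if_neg (by omega), if_neg (by omega),
          show (2*n+1-k) = 0 from by omega]
        rfl
      · rw [runW_hi (by omega), runW_hi (by omega), hα k,
          if_neg (by omega), if_neg (by omega), if_neg (by omega)]
        rfl
    · have hstates : ∀ k, 2*n+2 ≤ k → (runW n k).1 = .s2 := by
        intro k hk
        rw [runW_hi (by omega)]
      have hio : InfOcc (runW n) = {.s2} := by
        ext q
        constructor
        · intro hq
          obtain ⟨m, hm, he⟩ := hq (2*n+2)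
          rw [hstates m hm] at he
          exact he.symm
        · rintro rfl
          intro N
          exact ⟨N + 2*n+2, by omega, hstates _ (by omega)⟩
      unfold ParityAcc
      rw [hio]
      simp [colD]
end Anbanb
namespace Anbanb
open PDM

section Visibly
variable {Q A Γ : Type} {M : PDM Q A Γ} {kind : A → VKind}

lemma vstep_call {a : A} (hv : M.Visibly kind) (hk : kind a = .call) {c c' : Conf Q Γ}
    (h : M.Step c (some a) c') :
    ∃ B, c'.2 = B :: c.2 ∧ ∀ l₀, M.Step (c.1, l₀) (some a) (c'.1, B :: l₀) := by
  obtain ⟨mv, hmv⟩ := hv.2.1 c.1 a hk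
  rcases c with ⟨q, l⟩
  have htrans : ∀ (B : Γ) (q' : Q), (q', B) ∈ mv →
      ∀ l₀ : List Γ, M.Step (q, l₀) (some a) (q', B :: l₀) := by
    intro B q' hBq' l₀
    cases l₀ with
    | nil =>
      refine step_nil ?_
      rw [hmv none]
      exact ⟨(q', B), hBq', rfl⟩
    | cons t rest =>
      refine step_cons [B, t] ?_ rfl
      rw [hmv (some t)]
      exact ⟨(q', B), hBq', rfl⟩
  cases l with
  | nil =>
    have h' : c' ∈ M.δ q (some a) none := h
    rw [hmv none] at h'
    obtain ⟨⟨q', B⟩, hp, heq⟩ := h'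
    subst heq
    exact ⟨B, rfl, fun l₀ => htrans B q' hp l₀⟩
  | cons t rest =>
    obtain ⟨γ', hγ, heq⟩ := h
    rw [hmv (some t)] at hγ
    obtain ⟨⟨q', B⟩, hp, heq2⟩ := hγ
    injection heq2 with e1 e2
    refine ⟨B, ?_, ?_⟩
    · rw [heq, ← e2]; rfl
    · rw [← e1]; exact htrans B q' hp
  
lemma vstep_intern {a : A} (hv : M.Visibly kind) (hk : kind a = .intern) {c c' : Conf Q Γ}
    (h : M.Step c (some a) c') :
    c'.2 = c.2 ∧ ∀ l₀, M.Step (c.1, l₀) (some a) (c'.1, l₀) := by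
  obtain ⟨mv, hmv⟩ := hv.2.2.2 c.1 a hk
  rcases c with ⟨q, l⟩
  have hq' : c'.1 ∈ mv ∧ c'.2 = l := by
    cases l with
    | nil =>
      have h' : c' ∈ M.δ q (some a) none := h
      rw [hmv none] at h'
      obtain ⟨q', hq', heq⟩ := h'
      subst heq
      exact ⟨hq', rfl⟩
    | cons t rest =>
      obtain ⟨γ', hγ, heq⟩ := h
      rw [hmv (some t)] at hγ
      obtain ⟨q', hq', heq2⟩ := hγ
      injection heq2 with e1 e2
      constructor
      · rw [← e1]; exact hq'
      · rw [heq, ← e2]; rfl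
  refine ⟨hq'.2, fun l₀ => ?_⟩
  cases l₀ with
  | nil =>
    refine step_nil ?_
    rw [hmv none]
    exact ⟨c'.1, hq'.1, rfl⟩
  | cons t rest =>
    refine step_cons [t] ?_ rfl
    rw [hmv (some t)]
    exact ⟨c'.1, hq'.1, rfl⟩

lemma vstep_ret_tail {a : A} (hv : M.Visibly kind) (hk : kind a = .ret) {c c' : Conf Q Γ}
    (h : M.Step c (some a) c') : c'.2 = c.2.tail := by
  rcases c with ⟨q, l⟩
  cases l with
  | nil => exact hv.2.2.1 q a none hk c' h
  | cons t rest =>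
    obtain ⟨γ', hγ, heq⟩ := h
    have : (c'.1, γ').2 = ([] : List Γ) := hv.2.2.1 q a (some t) hk _ hγ
    simp only at this
    rw [heq, this]
    rfl

lemma vstep_ret_cons {a : A} (hv : M.Visibly kind) (hk : kind a = .ret) {q : Q} {t : Γ}
    {rest : List Γ} {c' : Conf Q Γ} (h : M.Step (q, t :: rest) (some a) c') :
    c'.2 = rest ∧ ∀ rest', M.Step (q, t :: rest') (some a) (c'.1, rest') := by
  obtain ⟨γ', hγ, heq⟩ := h
  have hnil : (c'.1, γ').2 = ([] : List Γ) := hv.2.2.1 q a (some t) hk _ hγ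
  simp only at hnil
  subst hnil
  exact ⟨heq, fun rest' => step_cons [] hγ rfl⟩

lemma vstep_stack {a : A} (hv : M.Visibly kind) {c c' : Conf Q Γ}
    (h : M.Step c (some a) c') :
    (∃ B, c'.2 = B :: c.2) ∨ c'.2 = c.2 ∨ c'.2 = c.2.tail := by
  rcases hk : kind a with _ | _ | _
  · obtain ⟨B, hB, -⟩ := vstep_call hv hk h
    exact Or.inl ⟨B, hB⟩
  · exact Or.inr (Or.inr (vstep_ret_tail hv hk h))
  · exact Or.inr (Or.inl (vstep_intern hv hk h).1)

lemma drop_step {Γ : Type} {l l' : List Γ}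
    (hrel : (∃ B, l' = B :: l) ∨ l' = l ∨ l' = l.tail) {h : ℕ}
    (h1 : h ≤ l.length) (h2 : h ≤ l'.length) :
    l'.drop (l'.length - h) = l.drop (l.length - h) := by
  rcases hrel with ⟨B, rfl⟩ | rfl | rfl
  · rw [show (B :: l).length - h = (l.length - h) + 1 from by simp; omega,
      List.drop_succ_cons]
  · rfl
  · cases l with
    | nil => rfl
    | cons t r =>
      simp only [List.tail_cons] at h2 ⊢
      rw [show (t :: r).length - h = (r.length - h) + 1 from by simp; omega,
        List.drop_succ_cons]

/-- Bottom of the stack is preserved while the stack height stays at least `h`. -/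
lemma bottom_pres (hv : M.Visibly kind) {ρ : ℕ → Conf Q Γ} {α : ℕ → A}
    (hs : ∀ k, M.Step (ρ k) (some (α k)) (ρ (k+1))) (h p r : ℕ) (hpr : p ≤ r)
    (hall : ∀ k, p ≤ k → k ≤ r → h ≤ (ρ k).2.length) :
    (ρ r).2.drop ((ρ r).2.length - h) = (ρ p).2.drop ((ρ p).2.length - h) := by
  induction r, hpr using Nat.le_induction with
  | base => rfl
  | succ r hpr ih =>
    rw [drop_step (vstep_stack hv (hs r)) (hall r hpr (by omega)) (hall (r+1) (by omega) le_rfl)]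
    exact ih fun k h1 h2 => hall k h1 (by omega)

lemma stacks_eq (hv : M.Visibly kind) {ρ : ℕ → Conf Q Γ} {α : ℕ → A}
    (hs : ∀ k, M.Step (ρ k) (some (α k)) (ρ (k+1))) (h p r : ℕ) (hpr : p ≤ r)
    (hall : ∀ k, p ≤ k → k ≤ r → h ≤ (ρ k).2.length)
    (hp : (ρ p).2.length = h) (hr : (ρ r).2.length = h) : (ρ r).2 = (ρ p).2 := by
  have := bottom_pres hv hs h p r hpr hall
  rwa [hp, hr, Nat.sub_self, List.drop_zero, List.drop_zero] at this

end Visibly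
end Anbanb
namespace Anbanb
open PDM

lemma w_a1 {n i : ℕ} (h : i < n) : w n i = .a := if_pos h
lemma w_b1 (n : ℕ) : w n n = .b := by unfold w; rw [if_neg (by omega), if_pos rfl]
lemma w_a2 {n i : ℕ} (h1 : n < i) (h2 : i ≤ 2*n) : w n i = .a := by
  unfold w; rw [if_neg (by omega), if_neg (by omega), if_pos h2]
lemma w_b2 {n i : ℕ} (h : 2*n < i) : w n i = .b := by
  unfold w; rw [if_neg (by omega), if_neg (by omega), if_neg (by omega)]
lemma w_val (n i : ℕ) : w n i = .a ∨ w n i = .b := by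
  unfold w; split_ifs <;> simp

section Splice
variable {Q A Γ : Type} {M : PDM Q A Γ} {kind : A → VKind}

/-- The general splicing lemma: glue a prefix of `ρ` (up to time `m`) with the tail of
`ρ'` (from time `n` on), provided states agree and a compatible stack sequence `g` for
the tail exists. -/
lemma splice (col : Q → ℕ) (hrt : ∀ q t, M.δ q none t = ∅)
    {ρ ρ' : ℕ → Conf Q Γ} {α α' : ℕ → A}
    (h0 : ρ 0 = (M.qin, []))
    (hsρ : ∀ k, M.Step (ρ k) (some (α k)) (ρ (k+1)))
    (hsρ' : ∀ k, M.Step (ρ' k) (some (α' k)) (ρ' (k+1)))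
    (hacc : ParityAcc col ρ') (m n : ℕ) (hq : (ρ m).1 = (ρ' n).1)
    (g : ℕ → List Γ) (hg0 : g 0 = (ρ m).2)
    (hgs : ∀ j, M.Step ((ρ' (n+j)).1, g j) (some (α' (n+j))) ((ρ' (n+j+1)).1, g (j+1))) :
    (fun i => if i < m then α i else α' (n + (i - m))) ∈ ParityLang M col := by
  set σ : ℕ → Conf Q Γ := fun k => if k < m then ρ k else ((ρ' (n + (k-m))).1, g (k-m))
    with hσ
  have hσm : ∀ k, m ≤ k → σ k = ((ρ' (n + (k-m))).1, g (k-m)) := by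
    intro k hk
    simp only [hσ, if_neg (by omega : ¬ k < m)]
  have hσρ : ∀ k, k ≤ m → σ k = ρ k := by
    intro k hk
    rcases Nat.lt_or_ge k m with h | h
    · simp only [hσ, if_pos h]
    · have hkm : k = m := by omega
      rw [hσm k h, hkm, Nat.sub_self, Nat.add_zero, hg0, ← hq]
  refine ⟨σ, ?_, ?_⟩
  · rw [isRunOn_iff_of_realtime hrt]
    refine ⟨by rw [hσρ 0 (by omega)]; exact h0, fun k => ?_⟩
    rcases Nat.lt_or_ge k m with h | h
    · rw [hσρ k (by omega), hσρ (k+1) (by omega), if_pos h]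
      exact hsρ k
    · rw [hσm k h, hσm (k+1) (by omega), if_neg (by omega),
        show k+1-m = (k-m)+1 from by omega]
      exact hgs (k-m)
  · rw [parityAcc_congr (infOcc_eq_of_shift m n (fun j => ?_))]
    · exact hacc
    · rw [hσm (m+j) (by omega), show m+j-m = j from by omega]

/-- Stack sequence for the tail when no return occurs in the tail. -/
def spliceStack {Γ : Type} (base : List Γ) (st : ℕ → List Γ) : ℕ → List Γ
  | 0 => base
  | j+1 => (st (j+1)).take ((st (j+1)).length - (st j).length) ++ spliceStack base st j

lemma spliceStack_steps (hv : M.Visibly kind) {ρ' : ℕ → Conf Q Γ} {α' : ℕ → A}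
    (hs' : ∀ k, M.Step (ρ' k) (some (α' k)) (ρ' (k+1))) (n : ℕ)
    (hnr : ∀ j, kind (α' (n+j)) ≠ .ret) (base : List Γ) :
    ∀ j, M.Step ((ρ' (n+j)).1, spliceStack base (fun i => (ρ' (n+i)).2) j)
      (some (α' (n+j))) ((ρ' (n+j+1)).1, spliceStack base (fun i => (ρ' (n+i)).2) (j+1)) := by
  intro j
  have hstep := hs' (n+j)
  rcases hk : kind (α' (n+j)) with _ | _ | _
  · obtain ⟨B, hB, htrans⟩ := vstep_call hv hk hstep
    have e : (ρ' (n+(j+1))).2 = B :: (ρ' (n+j)).2 := by rw [← Nat.add_assoc]; exact hB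
    have : spliceStack base (fun i => (ρ' (n+i)).2) (j+1)
        = B :: spliceStack base (fun i => (ρ' (n+i)).2) j := by
      show List.take ((ρ' (n+(j+1))).2.length - (ρ' (n+j)).2.length) ((ρ' (n+(j+1))).2)
          ++ _ = _
      rw [e, show (B :: (ρ' (n+j)).2).length - (ρ' (n+j)).2.length = 1 from by simp]
      rfl
    rw [this]
    exact htrans _
  · exact absurd hk (hnr j)
  · obtain ⟨hB, htrans⟩ := vstep_intern hv hk hstep
    have e : (ρ' (n+(j+1))).2 = (ρ' (n+j)).2 := by rw [← Nat.add_assoc]; exact hB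
    have : spliceStack base (fun i => (ρ' (n+i)).2) (j+1)
        = spliceStack base (fun i => (ρ' (n+i)).2) j := by
      show List.take ((ρ' (n+(j+1))).2.length - (ρ' (n+j)).2.length) ((ρ' (n+(j+1))).2)
          ++ _ = _
      rw [e, Nat.sub_self]
      rfl
    rw [this]
    exact htrans _

/-- The swapped word `aᵐ b aⁿ b^ω` is not in `L` for `n ≠ m`. -/
lemma swap_not_mem {n m : ℕ} (hnm : n ≠ m) :
    (fun i => if i < m then w m i else w n (n + (i - m))) ∉ Lanbanb := by
  rintro ⟨n', hn'⟩
  have hval : ∀ i, (if i < m then w m i else w n (n + (i - m)))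
      = (if i < n' then AB.a else if i = n' then AB.b
          else if i ≤ 2 * n' then AB.a else AB.b) := fun i => hn' i
  have hn'm : n' = m := by
    rcases lt_trichotomy n' m with h | h | h
    · have h1 := hval n'
      rw [if_pos h, w_a1 h, if_neg (by omega), if_pos (by omega)] at h1
      cases h1
    · exact h
    · have h1 := hval m
      rw [if_neg (by omega), Nat.sub_self, Nat.add_zero, w_b1, if_pos h] at h1
      cases h1
  rw [hn'm] at hval
  rcases lt_or_gt_of_ne hnm with h | h
  · -- n < m : look at i = m + n + 1
    have h1 := hval (m + n + 1)
    rw [if_neg (by omega), show m + n + 1 - m = n + 1 from by omega, w_b2 (by omega),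
      if_neg (by omega), if_neg (by omega), if_pos (by omega)] at h1
    cases h1
  · -- m < n : look at i = m + n
    have h1 := hval (m + n)
    rw [if_neg (by omega), show m + n - m = n from by omega, w_a2 (by omega) (by omega),
      if_neg (by omega), if_neg (by omega), if_neg (by omega)] at h1
    cases h1

/-- Stack stays empty while no call is read. -/
lemma stack_nil (hv : M.Visibly kind) {ρ : ℕ → Conf Q Γ} {α : ℕ → A}
    (h0 : ρ 0 = (M.qin, [])) (hs : ∀ k, M.Step (ρ k) (some (α k)) (ρ (k+1)))
    (k : ℕ) (hnc : ∀ i < k, kind (α i) ≠ .call) : (ρ k).2 = [] := by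
  induction k with
  | zero => rw [h0]
  | succ k ih =>
    have hk := ih (fun i hi => hnc i (by omega))
    rcases hkind : kind (α k) with _ | _ | _
    · exact absurd hkind (hnc k (by omega))
    · rw [vstep_ret_tail hv hkind (hs k), hk]; rfl
    · rw [(vstep_intern hv hkind (hs k)).1, hk]

end Splice
end Anbanb
namespace Anbanb
open PDM

lemma not_VPL_easy {Q Γ : Type} [Finite Q] {M : PDM Q AB Γ} {col : Q → ℕ}
    {kind : AB → VKind} (hv : M.Visibly kind) (hlang : ParityLang M col = Lanbanb)
    (hcase : kind AB.a ≠ VKind.call ∨ (kind AB.a = VKind.call ∧ kind AB.b ≠ VKind.ret)) :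
    False := by
  have hrt := hv.1
  have hrun : ∀ k : ℕ, ∃ ρ : ℕ → Conf Q Γ,
      (ρ 0 = (M.qin, []) ∧ ∀ i, M.Step (ρ i) (some (w k i)) (ρ (i+1))) ∧ ParityAcc col ρ := by
    intro k
    have hmem : w k ∈ ParityLang M col := by rw [hlang]; exact w_mem k
    obtain ⟨ρ, hr, hacc⟩ := hmem
    rw [isRunOn_iff_of_realtime hrt] at hr
    exact ⟨ρ, hr, hacc⟩
  choose ρs hs using hrun
  haveI := Fintype.ofFinite Q
  obtain ⟨x, y, hxy, hfxy⟩ := Fintype.exists_ne_map_eq_of_card_lt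
    (fun i : Fin (Fintype.card Q + 1) => (ρs i.1 i.1).1) (by simp)
  set n := x.1 with hnx
  set m := y.1 with hmy
  have hnm : n ≠ m := fun h => hxy (Fin.val_injective h)
  have hq : (ρs m m).1 = (ρs n n).1 := hfxy.symm
  have key : (fun i => if i < m then w m i else w n (n + (i - m))) ∈ ParityLang M col := by
    rcases hcase with hka | ⟨hka, hkb⟩
    · -- `a` is not a call: stacks are empty after the first block
      have hsn : (ρs n n).2 = [] :=
        stack_nil hv (hs n).1.1 (hs n).1.2 n (fun i hi => by rw [w_a1 hi]; exact hka)
      have hsm : (ρs m m).2 = [] :=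
        stack_nil hv (hs m).1.1 (hs m).1.2 m (fun i hi => by rw [w_a1 hi]; exact hka)
      refine splice col hrt (hs m).1.1 (hs m).1.2 (hs n).1.2 (hs n).2 m n hq
        (fun j => (ρs n (n+j)).2) (by rw [hsm]; exact hsn) (fun j => ?_)
      simpa only [Prod.mk.eta, ← Nat.add_assoc] using (hs n).1.2 (n+j)
    · -- `a` is a call, `b` is not a return: tail contains no returns
      have hnr : ∀ j, kind (w n (n+j)) ≠ VKind.ret := by
        intro j
        rcases w_val n (n+j) with h | h <;> rw [h]
        · rw [hka]; simp
        · exact hkb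
      exact splice col hrt (hs m).1.1 (hs m).1.2 (hs n).1.2 (hs n).2 m n hq
        (spliceStack (ρs m m).2 (fun i => (ρs n (n+i)).2)) rfl
        (spliceStack_steps hv (hs n).1.2 n hnr _)
  rw [hlang] at key
  exact swap_not_mem hnm key

end Anbanb
namespace Anbanb
open PDM

/-- Height profile of any run on `w n`. -/
def Hh (n k : ℕ) : ℕ := if k ≤ n then k else if k ≤ 2*n+1 then k - 2 else 4*n - k

section HardAux
variable {Q Γ : Type} {M : PDM Q AB Γ} {kind : AB → VKind}

lemma heights (hv : M.Visibly kind) (hka : kind AB.a = VKind.call)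
    (hkb : kind AB.b = VKind.ret) {n : ℕ} (hn : 1 ≤ n) {ρ : ℕ → Conf Q Γ}
    (h0 : ρ 0 = (M.qin, [])) (hst : ∀ k, M.Step (ρ k) (some (w n k)) (ρ (k+1))) :
    ∀ k, (ρ k).2.length = Hh n k := by
  intro k
  induction k with
  | zero => rw [h0]; unfold Hh; simp
  | succ k ih =>
    rcases lt_or_ge k n with h | h
    · -- letter a, push
      obtain ⟨B, hB, -⟩ := vstep_call hv (by rw [w_a1 h]; exact hka) (hst k)
      rw [hB, List.length_cons, ih]
      unfold Hh; split_ifs <;> omega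
    rcases Nat.eq_or_lt_of_le h with h' | h'
    · -- letter b at k = n, pop
      have := vstep_ret_tail hv (by rw [← h', w_b1]; exact hkb) (hst k)
      rw [this, List.length_tail, ih]
      unfold Hh; split_ifs <;> omega
    rcases le_or_gt k (2*n) with h'' | h''
    · -- letter a, push
      obtain ⟨B, hB, -⟩ := vstep_call hv (by rw [w_a2 h' h'']; exact hka) (hst k)
      rw [hB, List.length_cons, ih]
      unfold Hh; split_ifs <;> omega
    · -- letter b, pop
      have := vstep_ret_tail hv (by rw [w_b2 h'']; exact hkb) (hst k)
      rw [this, List.length_tail, ih]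
      unfold Hh; split_ifs <;> omega

end HardAux

/-- The pumped word `aⁿ b aⁿ⁻ᵈ b^ω` is not in `L` for `1 ≤ d ≤ n`. -/
lemma pump_not_mem {n d : ℕ} (h1 : 1 ≤ d) (h2 : d ≤ n) :
    (fun k => if k < n then AB.a else if k = n then AB.b
      else if k ≤ 2*n - d then AB.a else AB.b) ∉ Lanbanb := by
  rintro ⟨n', hn'⟩
  have hval : ∀ i, (if i < n then AB.a else if i = n then AB.b
      else if i ≤ 2*n - d then AB.a else AB.b)
      = (if i < n' then AB.a else if i = n' then AB.b
          else if i ≤ 2 * n' then AB.a else AB.b) := fun i => hn' i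
  have hn'n : n' = n := by
    rcases lt_trichotomy n' n with h | h | h
    · have h1 := hval n'
      rw [if_pos h, if_neg (by omega), if_pos (by omega)] at h1
      cases h1
    · exact h
    · have h1 := hval n
      rw [if_neg (by omega), if_pos rfl, if_pos h] at h1
      cases h1
  rw [hn'n] at hval
  have h1 := hval (2*n)
  rw [if_neg (by omega), if_neg (by omega), if_neg (by omega),
    if_neg (by omega), if_neg (by omega), if_pos (by omega)] at h1
  cases h1

end Anbanb
namespace Anbanb
open PDM

lemma not_VPL_hard {Q Γ : Type} [Finite Q] {M : PDM Q AB Γ} {col : Q → ℕ}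
    {kind : AB → VKind} (hv : M.Visibly kind) (hlang : ParityLang M col = Lanbanb)
    (hka : kind AB.a = VKind.call) (hkb : kind AB.b = VKind.ret) : False := by
  have hrt := hv.1
  haveI := Fintype.ofFinite Q
  set c := Fintype.card Q with hc
  set n := c * c + 1 with hn
  have hn1 : 1 ≤ n := by omega
  have hmem : w n ∈ ParityLang M col := by rw [hlang]; exact w_mem n
  obtain ⟨ρ, hr, hacc⟩ := hmem
  rw [isRunOn_iff_of_realtime hrt] at hr
  obtain ⟨h0, hst⟩ := hr
  have hlen : ∀ k, (ρ k).2.length = Hh n k := heights hv hka hkb hn1 h0 hst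
  have key : ∀ i j : ℕ, i < j → j ≤ n →
      (ρ (n+1+i)).1 = (ρ (n+1+j)).1 → (ρ (3*n+1-i)).1 = (ρ (3*n+1-j)).1 → False := by
    intro i j hij hjn hE1 hE2
    set d := j - i with hd
    set sL := n+1+i with hsL
    set sL' := n+1+j with hsL'
    set tL := 3*n+1-i with htL
    set tL' := 3*n+1-j with htL'
    have hd1 : 1 ≤ d := by omega
    have hdn : d ≤ n := by omega
    have hlen_sL : (ρ sL).2.length = n-1+i := by rw [hlen]; unfold Hh; split_ifs <;> omega
    have hlen_sL' : (ρ sL').2.length = n-1+j := by rw [hlen]; unfold Hh; split_ifs <;> omega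
    have hlen_tL : (ρ tL).2.length = n-1+i := by rw [hlen]; unfold Hh; split_ifs <;> omega
    have hlen_tL' : (ρ tL').2.length = n-1+j := by rw [hlen]; unfold Hh; split_ifs <;> omega
    have hge_i : ∀ k, sL ≤ k → k ≤ tL → n-1+i ≤ (ρ k).2.length := by
      intro k h1 h2; rw [hlen]; unfold Hh; split_ifs <;> omega
    have hge_j : ∀ k, sL' ≤ k → k ≤ tL' → n-1+j ≤ (ρ k).2.length := by
      intro k h1 h2; rw [hlen]; unfold Hh; split_ifs <;> omega
    have hstack1 : (ρ tL).2 = (ρ sL).2 :=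
      stacks_eq hv hst (n-1+i) sL tL (by omega) hge_i hlen_sL hlen_tL
    have hstack2 : (ρ tL').2 = (ρ sL').2 :=
      stacks_eq hv hst (n-1+j) sL' tL' (by omega) hge_j hlen_sL' hlen_tL'
    set base := (ρ sL).2 with hbase
    set cut : List Γ → List Γ := fun l => l.take (l.length - (n-1+j)) ++ base with hcut
    have hcut_take0 : ∀ l : List Γ, l.length = n-1+j → cut l = base := by
      intro l hl
      simp only [hcut]
      rw [hl, Nat.sub_self, List.take_zero, List.nil_append]
    have hcut_cons : ∀ (t : Γ) (rest : List Γ), n-1+j ≤ rest.length →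
        cut (t :: rest) = t :: cut rest := by
      intro t rest hr
      simp only [hcut]
      rw [show (t::rest).length - (n-1+j) = (rest.length - (n-1+j)) + 1 from by
        simp only [List.length_cons]; omega, List.take_succ_cons, List.cons_append]
    set σ : ℕ → Conf Q Γ := fun k =>
      if k < sL then ρ k
      else if k < tL' - d then ((ρ (k+d)).1, cut (ρ (k+d)).2)
      else ρ (k + 2*d) with hσ
    have harith : sL ≤ tL' - d := by omega
    have hv2 : ∀ k, sL ≤ k → k ≤ tL' - d → σ k = ((ρ (k+d)).1, cut (ρ (k+d)).2) := by
      intro k h1 h2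
      rcases Nat.lt_or_ge k (tL' - d) with h | h
      · simp only [hσ]; rw [if_neg (by omega), if_pos h]
      · have e1 : k + 2*d = tL := by omega
        have e2 : k + d = tL' := by omega
        simp only [hσ]; rw [if_neg (by omega), if_neg (by omega), e1, e2]
        have ecut : cut (ρ tL').2 = (ρ tL).2 := by
          rw [hstack2, hcut_take0 _ hlen_sL']
          exact hstack1.symm
        rw [ecut, ← hE2, Prod.mk.eta]
    have hv1 : ∀ k, k ≤ sL → σ k = ρ k := by
      intro k h1
      rcases Nat.lt_or_ge k sL with h | h
      · simp only [hσ]; rw [if_pos h]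
      · have hk : k = sL := by omega
        have e : k + d = sL' := by omega
        rw [hv2 k (by omega) (by omega), e, hcut_take0 _ hlen_sL', ← hE1, hk]
    have hv3 : ∀ k, tL' - d ≤ k → σ k = ρ (k + 2*d) := by
      intro k h1
      simp only [hσ]; rw [if_neg (by omega), if_neg (by omega)]
    set β : ℕ → AB := fun k => if k < n then AB.a else if k = n then AB.b
      else if k ≤ 2*n - d then AB.a else AB.b with hβ
    have hsteps : ∀ k, M.Step (σ k) (some (β k)) (σ (k+1)) := by
      intro k
      rcases Nat.lt_or_ge k sL with h | h
      · have hβk : β k = w n k := by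
          simp only [hβ]; unfold w
          split_ifs <;> first | rfl | (exfalso; omega)
        rw [hv1 k (by omega), hv1 (k+1) (by omega), hβk]
        exact hst k
      rcases Nat.lt_or_ge k (tL' - d) with h2 | h2
      · have hb1 : sL' ≤ k + d := by omega
        have hb2 : k + d + 1 ≤ tL' := by omega
        have e : (k+1) + d = (k+d) + 1 := by omega
        rw [hv2 k (by omega) (by omega), hv2 (k+1) (by omega) (by omega), e]
        have hlb : n-1+j ≤ (ρ (k+d)).2.length := hge_j _ hb1 (by omega)
        have hlb' : n-1+j ≤ (ρ (k+d+1)).2.length := hge_j _ (by omega) hb2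
        rcases le_or_gt (k+d) (2*n) with hka' | hkb'
        · have hw : w n (k+d) = AB.a := w_a2 (by omega) hka'
          obtain ⟨B, hB, htrans⟩ := vstep_call hv (by rw [hw]; exact hka) (hst (k+d))
          have hβk : β k = AB.a := by
            simp only [hβ]; rw [if_neg (by omega), if_neg (by omega), if_pos (by omega)]
          have ecut : cut (ρ (k+d+1)).2 = B :: cut (ρ (k+d)).2 := by
            rw [hB]; exact hcut_cons B _ (by omega)
          rw [hβk, ecut, ← hw]
          exact htrans _
        · have hw : w n (k+d) = AB.b := w_b2 (by omega)
          rcases hl : (ρ (k+d)).2 with _ | ⟨t, rest⟩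
          · exfalso; rw [hl] at hlb; simp at hlb; omega
          have hstep' : M.Step ((ρ (k+d)).1, t :: rest) (some (w n (k+d))) (ρ (k+d+1)) := by
            rw [← hl, Prod.mk.eta]; exact hst (k+d)
          obtain ⟨hrest, htrans⟩ := vstep_ret_cons hv (by rw [hw]; exact hkb) hstep'
          have hβk : β k = AB.b := by
            simp only [hβ]; rw [if_neg (by omega), if_neg (by omega), if_neg (by omega)]
          have hrlen : n-1+j ≤ rest.length := by rw [← hrest]; exact hlb'
          have e2 : cut (ρ (k+d+1)).2 = cut rest := by rw [hrest]
          rw [hβk, hcut_cons t rest hrlen, e2, ← hw]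
          exact htrans _
      · have e : (k+1) + 2*d = (k + 2*d) + 1 := by omega
        rw [hv3 k (by omega), hv3 (k+1) (by omega), e]
        have hw : w n (k + 2*d) = AB.b := w_b2 (by omega)
        have hβk : β k = AB.b := by
          simp only [hβ]; rw [if_neg (by omega), if_neg (by omega), if_neg (by omega)]
        rw [hβk, ← hw]
        exact hst _
    have hrun : M.IsRunOn σ β := by
      rw [isRunOn_iff_of_realtime hrt]
      exact ⟨by rw [hv1 0 (by omega)]; exact h0, hsteps⟩
    have haccσ : ParityAcc col σ := by
      rw [parityAcc_congr (infOcc_eq_of_shift (tL' - d) (tL' + d) (fun j' => ?_))]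
      · exact hacc
      · rw [hv3 (tL' - d + j') (by omega),
          show tL' - d + j' + 2*d = tL' + d + j' from by omega]
    have hfin : β ∈ Lanbanb := by rw [← hlang]; exact ⟨σ, hrun, haccσ⟩
    rw [hβ] at hfin
    exact pump_not_mem hd1 hdn hfin
  obtain ⟨x, y, hxy, hF⟩ := Fintype.exists_ne_map_eq_of_card_lt
    (fun i : Fin (n+1) => ((ρ (n+1+i.1)).1, (ρ (3*n+1-i.1)).1))
    (by
      rw [Fintype.card_fin, Fintype.card_prod, ← hc]
      exact Nat.lt_succ_of_lt (Nat.lt_succ_self (c*c)))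
  rcases Nat.lt_or_ge x.1 y.1 with h | h
  · exact key x.1 y.1 h (Nat.lt_succ_iff.mp y.isLt)
      (Prod.ext_iff.mp hF).1 (Prod.ext_iff.mp hF).2
  · have h' : y.1 < x.1 :=
      lt_of_le_of_ne h (fun e => hxy (Fin.val_injective e.symm))
    exact key y.1 x.1 h' (Nat.lt_succ_iff.mp x.isLt)
      (Prod.ext_iff.mp hF.symm).1 (Prod.ext_iff.mp hF.symm).2

end Anbanb
/-- `L = {aⁿ b aⁿ b^ω | n ∈ ℕ} ∈ DCFL_ω`, but for every partition of
`{a,b}` into calls, returns and internal actions, `L ∉ VPL_ω`; hence `DCFL_ω ⊄ VPL_ω`. -/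
theorem anbanb_in_DCFLomega_not_in_VPLomega :
    InDCFLomega Lanbanb ∧ ∀ kind : AB → VKind, ¬ InVPLomega kind Lanbanb := by
  constructor
  · exact ⟨Anbanb.St, Unit, inferInstance, inferInstance, Anbanb.MD, Anbanb.colD,
      Anbanb.MD_det, Anbanb.parityLang_MD⟩
  · rintro kind ⟨Q, Γ, hQ, hΓ, M, col, hvis, hlang⟩
    haveI := hQ
    rcases hka : kind AB.a with _ | _ | _
    · rcases hkb : kind AB.b with _ | _ | _
      · exact Anbanb.not_VPL_easy hvis hlang (Or.inr ⟨hka, by rw [hkb]; exact fun h => nomatch h⟩)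
      · exact Anbanb.not_VPL_hard hvis hlang hka hkb
      · exact Anbanb.not_VPL_easy hvis hlang (Or.inr ⟨hka, by rw [hkb]; exact fun h => nomatch h⟩)
    · exact Anbanb.not_VPL_easy hvis hlang (Or.inl (by rw [hka]; exact fun h => nomatch h))
    · exact Anbanb.not_VPL_easy hvis hlang (Or.inl (by rw [hka]; exact fun h => nomatch h))
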